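/- For every permutation σ of {1,2} and every non-negative integer n, θ(F_σ(n+1)) ⊆ F_σ(n). -/

import Mathlib

open Submodule

/-- The projection onto `A` along a complement `B`, as an endomorphism of `E`. -/
noncomputable def projAlong {K E : Type*} [Field K] [AddCommGroup E] [Module K E]
    (A B : Submodule K E) (h : IsCompl A B) : E →ₗ[K] E :=
  A.subtype ∘ₗ A.linearProjOfIsCompl B h

/-- `θ = p_{W₁}^{W₂} ∘ p_{V₁}^{V₂} − p_{V₁}^{V₂} ∘ p_{W₁}^{W₂}`. -/
noncomputable def theta {K E : Type*} [Field K] [AddCommGroup E] [Module K E]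
    (V W : Fin 2 → Submodule K E)
    (hV : IsCompl (V 0) (V 1)) (hW : IsCompl (W 0) (W 1)) : Module.End K E :=
  projAlong (W 0) (W 1) hW ∘ₗ projAlong (V 0) (V 1) hV -
    projAlong (V 0) (V 1) hV ∘ₗ projAlong (W 0) (W 1) hW

/-- For a permutation `σ` of `{1,2}`, the increasing sequence of subspaces `F_σ(n)`:
`F_σ(0) = ⊥`, `F_σ(n+1) = Σ_i (F_σ(n) + Vᵢ) ⊓ (F_σ(n) + W_{σ(i)})`. -/
noncomputable def Fsig {K E : Type*} [Field K] [AddCommGroup E] [Module K E]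
    (V W : Fin 2 → Submodule K E) (σ : Equiv.Perm (Fin 2)) : ℕ → Submodule K E
  | 0 => ⊥
  | n + 1 => ⨆ i : Fin 2, (Fsig V W σ n ⊔ V i) ⊓ (Fsig V W σ n ⊔ W (σ i))

section helpers
variable {K E : Type*} [Field K] [AddCommGroup E] [Module K E]
variable {A B : Submodule K E} {h : IsCompl A B}

lemma projAlong_mem (x : E) : projAlong A B h x ∈ A := (A.linearProjOfIsCompl B h x).2

lemma projAlong_of_mem {x : E} (hx : x ∈ A) : projAlong A B h x = x := by
  have := Submodule.linearProjOfIsCompl_apply_left h ⟨x, hx⟩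
  simp only [projAlong, LinearMap.comp_apply]
  rw [show (⟨x, hx⟩ : A).1 = x from rfl] at this
  exact congrArg A.subtype this

lemma projAlong_of_mem_right {x : E} (hx : x ∈ B) : projAlong A B h x = 0 := by
  have := Submodule.linearProjOfIsCompl_apply_right h ⟨x, hx⟩
  simp only [projAlong, LinearMap.comp_apply]
  rw [show (⟨x, hx⟩ : B).1 = x from rfl] at this
  exact (congrArg A.subtype this).trans (map_zero _)

lemma sub_projAlong_mem (x : E) : x - projAlong A B h x ∈ B := by
  obtain ⟨a, ha, b, hb, rfl⟩ : ∃ a ∈ A, ∃ b ∈ B, x = a + b := by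
    obtain ⟨a, b, hab⟩ := Submodule.existsUnique_add_of_isCompl h x
    exact ⟨a, a.2, b, b.2, hab.1.symm⟩
  rw [map_add, projAlong_of_mem ha, projAlong_of_mem_right hb]
  simpa using hb

variable (V W : Fin 2 → Submodule K E)
variable (hV : IsCompl (V 0) (V 1)) (hW : IsCompl (W 0) (W 1))

lemma theta_apply (x : E) : theta V W hV hW x =
    projAlong (W 0) (W 1) hW (projAlong (V 0) (V 1) hV x) -
    projAlong (V 0) (V 1) hV (projAlong (W 0) (W 1) hW x) := by
  simp [theta, LinearMap.sub_apply, LinearMap.comp_apply]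

lemma theta_mapsV {i : Fin 2} {x : E} (hx : x ∈ V i) :
    theta V W hV hW x ∈ V (i + 1) := by
  rcases eq_or_ne i 0 with rfl | hi
  · rw [theta_apply, projAlong_of_mem hx]
    exact sub_projAlong_mem _
  · have hi1 : i = 1 := by omega
    subst hi1
    rw [theta_apply, projAlong_of_mem_right hx, map_zero, zero_sub]
    exact neg_mem (projAlong_mem _)

lemma theta_mapsW {j : Fin 2} {x : E} (hx : x ∈ W j) :
    theta V W hV hW x ∈ W (j + 1) := by
  rcases eq_or_ne j 0 with rfl | hj
  · rw [theta_apply, projAlong_of_mem hx, ← neg_sub]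
    exact neg_mem (sub_projAlong_mem _)
  · have hj1 : j = 1 := by omega
    subst hj1
    rw [theta_apply, projAlong_of_mem_right hx, map_zero, sub_zero]
    exact projAlong_mem _

lemma theta_eq_zero {i j : Fin 2} {x : E} (hxV : x ∈ V i) (hxW : x ∈ W j) :
    theta V W hV hW x = 0 := by
  rw [theta_apply]
  rcases eq_or_ne i 0 with rfl | hi
  · rw [projAlong_of_mem hxV]
    rcases eq_or_ne j 0 with rfl | hj
    · rw [projAlong_of_mem hxW, projAlong_of_mem hxV, sub_self]
    · have : j = 1 := by omega
      subst this
      rw [projAlong_of_mem_right hxW, map_zero, sub_zero]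
  · have : i = 1 := by omega
    subst this
    rw [projAlong_of_mem_right hxV, map_zero, zero_sub, neg_eq_zero]
    rcases eq_or_ne j 0 with rfl | hj
    · rw [projAlong_of_mem hxW]
      exact projAlong_of_mem_right hxV
    · have : j = 1 := by omega
      subst this
      rw [projAlong_of_mem_right hxW, map_zero]

end helpers

/-- For every permutation `σ` of `{1,2}` and every `n`, `θ(F_σ(n+1)) ⊆ F_σ(n)`. -/
theorem stmt5 {K E : Type*} [Field K] [AddCommGroup E] [Module K E]
    [FiniteDimensional K E] (hchar : (2 : K) ≠ 0)
    (V W : Fin 2 → Submodule K E)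
    (hV : IsCompl (V 0) (V 1)) (hW : IsCompl (W 0) (W 1)) :
    ∀ (σ : Equiv.Perm (Fin 2)) (n : ℕ),
      (Fsig V W σ (n + 1)).map (theta V W hV hW) ≤ Fsig V W σ n := by
  intro σ n
  have hσ : ∀ i : Fin 2, σ (i + 1) = σ i + 1 := by
    revert σ; decide
  induction n with
  | zero =>
    rw [show Fsig V W σ 1 = ⨆ i : Fin 2,
        (Fsig V W σ 0 ⊔ V i) ⊓ (Fsig V W σ 0 ⊔ W (σ i)) from rfl, Submodule.map_iSup]
    refine iSup_le fun i => ?_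
    rintro y ⟨x, hx, rfl⟩
    simp only [Fsig, bot_sup_eq, Submodule.mem_inf] at hx
    rw [theta_eq_zero V W hV hW hx.1 hx.2]
    exact Submodule.zero_mem _
  | succ n IH =>
    rw [show Fsig V W σ (n + 1 + 1) = ⨆ i : Fin 2,
        (Fsig V W σ (n+1) ⊔ V i) ⊓ (Fsig V W σ (n+1) ⊔ W (σ i)) from rfl, Submodule.map_iSup]
    refine iSup_le fun i => ?_
    rintro y ⟨x, hx, rfl⟩
    obtain ⟨hx1, hx2⟩ := hx
    obtain ⟨f, hf, v, hv, rfl⟩ := Submodule.mem_sup.mp hx1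
    obtain ⟨g, hg, w, hw, hgw⟩ := Submodule.mem_sup.mp hx2
    have hFle : Fsig V W σ n ≤ Fsig V W σ (n + 1) := by
      calc Fsig V W σ n ≤ (Fsig V W σ n ⊔ V 0) ⊓ (Fsig V W σ n ⊔ W (σ 0)) :=
            le_inf le_sup_left le_sup_left
        _ ≤ _ := le_iSup (fun i : Fin 2 =>
            (Fsig V W σ n ⊔ V i) ⊓ (Fsig V W σ n ⊔ W (σ i))) 0
    have hθf : theta V W hV hW f ∈ Fsig V W σ n := IH ⟨f, hf, rfl⟩
    have hvw : v - w ∈ Fsig V W σ (n + 1) := by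
      have : v - w = g - f := by
        rw [sub_eq_sub_iff_add_eq_add, hgw]
        abel
      rw [this]
      exact sub_mem hg hf
    have hθvw : theta V W hV hW (v - w) ∈ Fsig V W σ n := IH ⟨_, hvw, rfl⟩
    have hθv : theta V W hV hW v ∈ Fsig V W σ (n + 1) := by
      rw [show Fsig V W σ (n + 1) = ⨆ i : Fin 2,
          (Fsig V W σ n ⊔ V i) ⊓ (Fsig V W σ n ⊔ W (σ i)) from rfl]
      refine Submodule.mem_iSup_of_mem (i + 1) ⟨?_, ?_⟩
      · exact Submodule.mem_sup_right (theta_mapsV V W hV hW hv)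
      · rw [hσ i]
        have heq : theta V W hV hW v = theta V W hV hW w + theta V W hV hW (v - w) := by
          rw [map_sub]; abel
        rw [heq]
        exact add_mem (Submodule.mem_sup_right (theta_mapsW V W hV hW hw))
          (Submodule.mem_sup_left hθvw)
    rw [map_add]
    exact add_mem (hFle hθf) hθv
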